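/- The number φ² = (3+√5)/2 = φ + 1 is not a root of the chromatic polynomial of any graph. -/

import Mathlib

open SimpleGraph Polynomial

lemma poly_ext_nat {p q : Polynomial ℝ} (h : ∀ k : ℕ, p.eval (k:ℝ) = q.eval (k:ℝ)) : p = q := by
  have h0 : p - q = 0 := by
    apply Polynomial.eq_zero_of_infinite_isRoot
    apply Set.infinite_of_injective_forall_mem (f := fun n : ℕ => (n : ℝ))
      (hi := fun a b hab => Nat.cast_injective hab)
    intro n
    simp only [Set.mem_setOf_eq, IsRoot, eval_sub, sub_eq_zero, h n]
  exact sub_eq_zero.mp h0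

noncomputable def phi : ℝ := (1 + Real.sqrt 5) / 2

lemma sqrt5_sq : Real.sqrt 5 ^ 2 = 5 := Real.sq_sqrt (by norm_num)
lemma sqrt5_irr : Irrational (Real.sqrt 5) := (by norm_num : Nat.Prime 5).irrational_sqrt

lemma phi_sq : phi ^ 2 = (3 + Real.sqrt 5) / 2 := by
  have := sqrt5_sq; unfold phi; nlinarith [this]

noncomputable def mpoly : Polynomial ℤ := X ^ 2 + (C (-3) * X + C 1)

lemma mpoly_monic : mpoly.Monic := by
  apply Polynomial.monic_X_pow_add
  apply lt_of_le_of_lt (Polynomial.degree_add_le _ _)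
  simp only [max_lt_iff]
  constructor
  · exact lt_of_le_of_lt (Polynomial.degree_C_mul_X_le _) (by norm_num)
  · exact lt_of_le_of_lt (Polynomial.degree_C_le) (by norm_num)

lemma mpoly_degree : mpoly.degree = 2 := by
  unfold mpoly
  compute_degree!

-- the two roots
lemma mpoly_eval (x : ℝ) : Polynomial.eval₂ (Int.castRingHom ℝ) x mpoly = x^2 - 3*x + 1 := by
  unfold mpoly
  simp [Polynomial.eval₂_add, Polynomial.eval₂_mul]
  ring

lemma conj_root (p : Polynomial ℤ)
    (h : Polynomial.eval₂ (Int.castRingHom ℝ) ((3 + Real.sqrt 5)/2) p = 0) :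
    Polynomial.eval₂ (Int.castRingHom ℝ) ((3 - Real.sqrt 5)/2) p = 0 := by
  set f := Int.castRingHom ℝ
  have hdiv := (Polynomial.modByMonic_add_div p mpoly).symm
  set r := p %ₘ mpoly with hr
  set s := p /ₘ mpoly with hs
  have hdeg : r.degree ≤ 1 := by
    have := Polynomial.degree_modByMonic_lt p mpoly_monic
    rw [mpoly_degree] at this
    exact Order.le_of_lt_succ (by exact_mod_cast this)
  have hrform := Polynomial.eq_X_add_C_of_degree_le_one hdeg
  set a := r.coeff 1
  set b := r.coeff 0
  have hm1 : Polynomial.eval₂ f ((3 + Real.sqrt 5)/2) mpoly = 0 := by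
    rw [mpoly_eval]; nlinarith [sqrt5_sq]
  have hm2 : Polynomial.eval₂ f ((3 - Real.sqrt 5)/2) mpoly = 0 := by
    rw [mpoly_eval]; nlinarith [sqrt5_sq]
  have key : (a:ℝ) * ((3 + Real.sqrt 5)/2) + b = 0 := by
    have := h
    rw [hdiv, hrform] at this
    simp only [Polynomial.eval₂_add, Polynomial.eval₂_mul, Polynomial.eval₂_C,
      Polynomial.eval₂_X, hm1] at this
    simpa using this
  have ha : a = 0 := by
    by_contra ha
    apply sqrt5_irr
    refine ⟨(-2*b - 3*a : ℤ) / (a : ℚ), ?_⟩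
    have ha' : (a:ℝ) ≠ 0 := Int.cast_ne_zero.mpr ha
    push_cast
    rw [div_eq_iff (by exact_mod_cast ha')]
    nlinarith [key]
  have hb : (b:ℝ) = 0 := by rw [ha] at key; simpa using key
  rw [hdiv, hrform]
  simp only [Polynomial.eval₂_add, Polynomial.eval₂_mul, Polynomial.eval₂_C,
    Polynomial.eval₂_X, hm2, ha, hb]
  simp [hb]

variable {V : Type}

lemma sym2_ne_of_ne {a b u v : V} (ha : a ≠ v) (hb : b ≠ v) : s(a, b) ≠ s(u, v) := by
  intro h; rw [Sym2.eq_iff] at h; tauto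

lemma sym2_ne_of_ne' {a u v : V} (ha : a ≠ u) (ha' : a ≠ v) : s(a, v) ≠ s(u, v) := by
  intro h; rw [Sym2.eq_iff] at h; tauto

def contractG (G : SimpleGraph V) (u v : V) : SimpleGraph {w : V // w ≠ v} where
  Adj a b := a ≠ b ∧ (G.Adj ↑a ↑b ∨ (G.Adj ↑a v ∧ (b : V) = u) ∨ (G.Adj ↑b v ∧ (a : V) = u))
  symm := by
    constructor
    rintro a b ⟨hne, h⟩
    refine ⟨hne.symm, ?_⟩
    rcases h with h | ⟨h1, h2⟩ | ⟨h1, h2⟩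
    · exact Or.inl h.symm
    · exact Or.inr (Or.inr ⟨h1, h2⟩)
    · exact Or.inr (Or.inl ⟨h1, h2⟩)
  loopless := ⟨fun a h => h.1 rfl⟩

lemma contractG_adj {G : SimpleGraph V} {u v : V} {a b : {w : V // w ≠ v}} :
    (contractG G u v).Adj a b ↔
      a ≠ b ∧ (G.Adj ↑a ↑b ∨ (G.Adj ↑a v ∧ (b : V) = u) ∨ (G.Adj ↑b v ∧ (a : V) = u)) :=
  Iff.rfl

open Classical in
/-- extension map -/
noncomputable def extMap {u v : V} (hne : u ≠ v) (w : V) : {w : V // w ≠ v} :=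
  if h : w = v then ⟨u, hne⟩ else ⟨w, h⟩

lemma extMap_ne {u v : V} (hne : u ≠ v) {w : V} (h : w ≠ v) : extMap hne w = ⟨w, h⟩ := by
  simp [extMap, h]

lemma extMap_v {u v : V} (hne : u ≠ v) : extMap hne v = ⟨u, hne⟩ := by
  simp [extMap]

section DelContract

variable {G : SimpleGraph V} {u v : V} {κ : Type} [DecidableEq κ]

/-- delete-contract: the coloring of G from a coloring of G-e with distinct endpoint colors -/
noncomputable def dcInl (huv : G.Adj u v) (f : (G.deleteEdges {s(u,v)}).Coloring κ) (h : f u ≠ f v) : G.Coloring κ :=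
  Coloring.mk f (by
    intro a b hab hfab
    by_cases he : s(a, b) = s(u, v)
    · rw [Sym2.eq_iff] at he
      rcases he with ⟨h1, h2⟩ | ⟨h1, h2⟩
      · subst h1; subst h2; exact h hfab
      · subst h1; subst h2; exact h hfab.symm
    · exact f.valid (by rw [deleteEdges_adj]; exact ⟨hab, by simpa using he⟩) hfab)

/-- delete-contract: the coloring of G/e from a coloring of G-e with equal endpoint colors -/
noncomputable def dcInr (huv : G.Adj u v) (f : (G.deleteEdges {s(u,v)}).Coloring κ) (h : f u = f v) :
    (contractG G u v).Coloring κ :=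
  Coloring.mk (fun a => f ↑a) (by
    rintro a b hab hfab
    rw [contractG_adj] at hab
    obtain ⟨hne, hadj | ⟨h1, h2⟩ | ⟨h1, h2⟩⟩ := hab
    · exact f.valid (by rw [deleteEdges_adj]
                        exact ⟨hadj, by simpa using sym2_ne_of_ne a.2 b.2⟩) hfab
    · -- G.Adj ↑a v, ↑b = u ; f ↑a = f ↑b = f u = f v
      have hau : (a : V) ≠ u := fun hh => hne (Subtype.ext (hh.trans h2.symm))
      have hfab' : f ↑a = f ↑b := hfab
      exact f.valid (v := (a : V)) (w := v)
        (by rw [deleteEdges_adj]; exact ⟨h1, by simpa using sym2_ne_of_ne' hau a.2⟩)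
        (hfab'.trans (by rw [h2, h]))
    · have hbu : (b : V) ≠ u := fun hh => hne (Subtype.ext (h2.trans hh.symm))
      have hfab' : f ↑a = f ↑b := hfab
      exact f.valid (v := (b : V)) (w := v)
        (by rw [deleteEdges_adj]; exact ⟨h1, by simpa using sym2_ne_of_ne' hbu b.2⟩)
        (hfab'.symm.trans (by rw [h2, h])))

/-- restriction of a G-coloring to G-e -/
noncomputable def dcFromG (huv : G.Adj u v) (g : G.Coloring κ) : (G.deleteEdges {s(u,v)}).Coloring κ :=
  Coloring.mk g (fun {a b} hab => g.valid (by rw [deleteEdges_adj] at hab; exact hab.1))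

/-- lift of a G/e-coloring to G-e -/
noncomputable def dcFromC (huv : G.Adj u v) (g : (contractG G u v).Coloring κ) : (G.deleteEdges {s(u,v)}).Coloring κ :=
  Coloring.mk (fun w => g (extMap (G.ne_of_adj huv) w)) (by
    intro a b hab
    rw [deleteEdges_adj] at hab
    obtain ⟨hadj, hs⟩ := hab
    simp only [Set.mem_singleton_iff] at hs
    apply g.valid
    rw [contractG_adj]
    by_cases ha : a = v
    · subst ha
      have hb : b ≠ a := fun h => (G.loopless.irrefl a (h ▸ hadj))
      have hbu : b ≠ u := by
        intro h; subst h; exact hs Sym2.eq_swap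
      rw [extMap_v, extMap_ne _ hb]
      exact ⟨fun h => hbu (congrArg Subtype.val h).symm,
        Or.inr (Or.inr ⟨hadj.symm, rfl⟩)⟩
    · by_cases hb : b = v
      · subst hb
        have hau : a ≠ u := by intro h; subst h; exact hs rfl
        rw [extMap_v, extMap_ne _ ha]
        exact ⟨fun h => hau (congrArg Subtype.val h),
          Or.inr (Or.inl ⟨hadj, rfl⟩)⟩
      · rw [extMap_ne _ ha, extMap_ne _ hb]
        exact ⟨fun h => (G.ne_of_adj hadj) (congrArg Subtype.val h),
          Or.inl hadj⟩)

noncomputable def delContractEquiv (huv : G.Adj u v) :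
    ((G.deleteEdges {s(u,v)}).Coloring κ) ≃ ((G.Coloring κ) ⊕ ((contractG G u v).Coloring κ)) where
  toFun f := if h : f u = f v then Sum.inr (dcInr huv f h) else Sum.inl (dcInl huv f h)
  invFun := Sum.elim (dcFromG huv) (dcFromC huv)
  left_inv f := by
    by_cases h : f u = f v
    · simp only [dif_pos h, Sum.elim_inr]
      ext z
      show (dcInr huv f h) (extMap (G.ne_of_adj huv) z) = f z
      by_cases hz : z = v
      · subst hz; rw [extMap_v]; exact h
      · rw [extMap_ne _ hz]; rfl
    · simp only [dif_neg h, Sum.elim_inl]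
      rfl
  right_inv g := by
    rcases g with g | g
    · simp only [Sum.elim_inl]
      refine (dif_neg (fun h => g.valid huv h : ¬ (dcFromG huv g) u = (dcFromG huv g) v)).trans ?_
      rfl
    · simp only [Sum.elim_inr]
      refine (dif_pos ?_).trans ?_
      swap
      · congr 1
        ext ⟨w, hw⟩
        show g (extMap (G.ne_of_adj huv) w) = g ⟨w, hw⟩
        rw [extMap_ne _ hw]
      · show g (extMap _ u) = g (extMap _ v)
        rw [extMap_v, extMap_ne _ (G.ne_of_adj huv)]

end DelContract

instance ccFinite [Finite V] (G : SimpleGraph V) : Finite G.ConnectedComponent :=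
  Quot.finite _

instance colFinite [Finite V] {κ : Type} [Finite κ] (G : SimpleGraph V) :
    Finite (G.Coloring κ) :=
  Finite.of_injective (fun c => (c : V → κ)) RelHom.coe_fn_injective

section Bridge

variable {G1 : SimpleGraph V} {u v : V} {κ : Type}

open scoped Classical

open scoped Classical in
/-- recolor the component of `v` by a permutation -/
noncomputable def recolor (π : Equiv.Perm κ) (f : G1.Coloring κ) (hv : True) : G1.Coloring κ :=
  Coloring.mk (fun w => if G1.Reachable v w then π (f w) else f w) (by
    intro a b hab
    by_cases ha : G1.Reachable v a
    · have hb : G1.Reachable v b := ha.trans hab.reachable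
      simp only [if_pos ha, if_pos hb]
      exact fun h => f.valid hab (π.injective h)
    · have hb : ¬ G1.Reachable v b := fun hb => ha (hb.trans hab.symm.reachable)
      simp only [if_neg ha, if_neg hb]
      exact f.valid hab)

lemma recolor_apply (π : Equiv.Perm κ) (f : G1.Coloring κ) {w : V} :
    recolor (v := v) π f trivial w
     = if G1.Reachable v w then π (f w) else f w := rfl

lemma recolor_recolor (π σ : Equiv.Perm κ) (f : G1.Coloring κ) :
    recolor (v := v) π (recolor (v := v) σ f trivial) trivial
      = recolor (v := v) (σ.trans π) f trivial := by
  ext w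
  rw [recolor_apply, recolor_apply, recolor_apply]
  by_cases h : G1.Reachable v w
  · rw [if_pos h, if_pos h, if_pos h]; rfl
  · rw [if_neg h, if_neg h, if_neg h]

lemma recolor_v (π : Equiv.Perm κ) (f : G1.Coloring κ) :
    recolor (v := v) π f trivial v = π (f v) := by
  rw [recolor_apply, if_pos (Reachable.refl v)]

lemma recolor_not_reach (π : Equiv.Perm κ) (f : G1.Coloring κ) {w : V}
    (h : ¬ G1.Reachable v w) : recolor (v := v) π f trivial w = f w := by
  rw [recolor_apply, if_neg h]

lemma recolor_id (f : G1.Coloring κ) : recolor (v := v) (Equiv.refl κ) f trivial = f := by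
  ext w
  rw [recolor_apply]
  by_cases h : G1.Reachable v w
  · rw [if_pos h]; rfl
  · rw [if_neg h]

variable [DecidableEq κ]

/-- colorings split according to the color of v -/
noncomputable def colorSplitEquiv (c0 : κ) :
    G1.Coloring κ ≃ ({g : G1.Coloring κ // g v = c0} × κ) where
  toFun f := (⟨recolor (v := v) (Equiv.swap (f v) c0) f trivial, by
      rw [recolor_v]; exact Equiv.swap_apply_left _ _⟩, f v)
  invFun x := recolor (v := v) (Equiv.swap x.2 c0) x.1.1 trivial
  left_inv f := by
    simp only
    rw [recolor_recolor]
    have : (Equiv.swap (f v) c0).trans (Equiv.swap (f v) c0) = Equiv.refl κ := by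
      ext x; simp
    rw [this, recolor_id]
  right_inv := by
    rintro ⟨⟨g, hg⟩, a⟩
    have hva : recolor (v := v) (Equiv.swap a c0) g trivial v = a := by
      rw [recolor_v, hg]; exact Equiv.swap_apply_right _ _
    simp only [Prod.mk.injEq, Subtype.mk.injEq, hva]
    constructor
    · rw [recolor_recolor]
      have : (Equiv.swap a c0).trans (Equiv.swap a c0) = Equiv.refl κ := by
        ext x; simp
      rw [this, recolor_id]
    · trivial

end Bridge

section BridgeCount

variable {G : SimpleGraph V} {u v : V}

open scoped Classical

lemma bridge_card_eq [Fintype V] (huv : G.Adj u v)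
    (hbr : ¬ (G.deleteEdges {s(u,v)}).Reachable u v) (k : ℕ) (hk : 0 < k) :
    k * Nat.card (G.Coloring (Fin k)) =
      (k - 1) * Nat.card ((G.deleteEdges {s(u,v)}).Coloring (Fin k)) := by
  set G1 := G.deleteEdges {s(u,v)} with hG1
  have hvu : ¬ G1.Reachable v u := fun h => hbr h.symm
  set c0 : Fin k := ⟨0, hk⟩ with hc0
  set M := {g : G1.Coloring (Fin k) // g v = c0} with hM
  -- equivalence 2 : colorings of G ≃ subtype of colorings of G1
  have e2 : G.Coloring (Fin k) ≃ {f : G1.Coloring (Fin k) // f u ≠ f v} :=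
    { toFun := fun g => ⟨dcFromG huv g, fun h => g.valid huv h⟩
      invFun := fun f => dcInl huv f.1 f.2
      left_inv := fun g => rfl
      right_inv := fun f => rfl }
  have e3 : {x : M × Fin k // (x.1 : G1.Coloring (Fin k)) u ≠ x.2} ≃
      {f : G1.Coloring (Fin k) // f u ≠ f v} := by
    refine Equiv.subtypeEquiv (colorSplitEquiv (v := v) c0).symm ?_
    rintro ⟨⟨g, hg⟩, a⟩
    have hinv : (colorSplitEquiv (v := v) c0).symm (⟨⟨g, hg⟩, a⟩ : M × Fin k)
        = recolor (v := v) (Equiv.swap a c0) g trivial := rfl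
    have hvv : recolor (v := v) (Equiv.swap a c0) g trivial v = a := by
      rw [recolor_v, hg]; exact Equiv.swap_apply_right _ _
    show (g u ≠ a) ↔ _
    rw [hinv, recolor_not_reach _ _ hvu, hvv]
  have e4 : {x : M × Fin k // (x.1 : G1.Coloring (Fin k)) u ≠ x.2} ≃
      Σ g : M, {a : Fin k // (g : G1.Coloring (Fin k)) u ≠ a} :=
    Equiv.subtypeProdEquivSigmaSubtype (fun (g : M) (a : Fin k) => (g : G1.Coloring (Fin k)) u ≠ a)
  have hcard1 : Nat.card (G1.Coloring (Fin k)) = Nat.card M * k := by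
    rw [Nat.card_congr (colorSplitEquiv (v := v) c0), Nat.card_prod,
      Nat.card_eq_fintype_card (α := Fin k), Fintype.card_fin]
  have hfib : ∀ g : M, Fintype.card {a : Fin k // (g : G1.Coloring (Fin k)) u ≠ a} = k - 1 := by
    intro g
    have h1 : Fintype.card {a : Fin k // (g : G1.Coloring (Fin k)) u = a} = 1 :=
      Fintype.card_subtype_eq' _
    have := Fintype.card_subtype_compl (fun a : Fin k => (g : G1.Coloring (Fin k)) u = a)
    rw [h1, Fintype.card_fin] at this
    convert this using 2
  have hcard2 : Nat.card (G.Coloring (Fin k)) = Nat.card M * (k - 1) := by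
    rw [Nat.card_congr ((e2.trans e3.symm).trans e4), Nat.card_eq_fintype_card,
      Fintype.card_sigma]
    simp only [hfib]
    rw [Finset.sum_const, Finset.card_univ, smul_eq_mul, Nat.card_eq_fintype_card]
  rw [hcard1, hcard2]
  ring

end BridgeCount
variable {V : Type}

section Components

variable {G : SimpleGraph V} {u v : V}

open scoped Classical

/-- Reachability classifier after deleting one edge. -/
lemma reach_delete_cases {a b : V} (w : G.Walk a b) :
    (G.deleteEdges {s(u,v)}).Reachable a b
    ∨ ((G.deleteEdges {s(u,v)}).Reachable a u ∧ (G.deleteEdges {s(u,v)}).Reachable v b)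
    ∨ ((G.deleteEdges {s(u,v)}).Reachable a v ∧ (G.deleteEdges {s(u,v)}).Reachable u b) := by
  induction w with
  | nil => exact Or.inl (Reachable.refl _)
  | @cons a c b h p ih =>
    by_cases he : s(a, c) = s(u, v)
    · rw [Sym2.eq_iff] at he
      rcases he with ⟨h1, h2⟩ | ⟨h1, h2⟩
      · subst h1; subst h2
        rcases ih with hr | ⟨h3, h4⟩ | ⟨h3, h4⟩
        · exact Or.inr (Or.inl ⟨Reachable.refl _, hr⟩)
        · exact Or.inl (h3.symm.trans h4)
        · exact Or.inl h4
      · subst h1; subst h2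
        rcases ih with hr | ⟨h3, h4⟩ | ⟨h3, h4⟩
        · exact Or.inr (Or.inr ⟨Reachable.refl _, hr⟩)
        · exact Or.inl h4
        · exact Or.inl (h3.symm.trans h4)
    · have ha : (G.deleteEdges {s(u,v)}).Adj a c := by
        rw [deleteEdges_adj]; exact ⟨h, by simpa using he⟩
      rcases ih with hr | ⟨h3, h4⟩ | ⟨h3, h4⟩
      · exact Or.inl (ha.reachable.trans hr)
      · exact Or.inr (Or.inl ⟨ha.reachable.trans h3, h4⟩)
      · exact Or.inr (Or.inr ⟨ha.reachable.trans h3, h4⟩)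

lemma reach_of_delete {a b : V} (h : (G.deleteEdges {s(u,v)}).Reachable a b) :
    G.Reachable a b := h.mono (by intro x y hxy; rw [deleteEdges_adj] at hxy; exact hxy.1)

/-- in the non-bridge case reachability in `G` and `G-e` coincide -/
lemma reach_iff_of_not_bridge (hre : (G.deleteEdges {s(u,v)}).Reachable u v) {a b : V}  :
    G.Reachable a b ↔ (G.deleteEdges {s(u,v)}).Reachable a b := by
  constructor
  · intro h
    obtain ⟨w⟩ := h
    rcases reach_delete_cases w with hr | ⟨h3, h4⟩ | ⟨h3, h4⟩
    · exact hr
    · exact (h3.trans hre).trans h4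
    · exact (h3.trans hre.symm).trans h4
  · exact reach_of_delete

/-- connected components of G-e in the non-bridge case -/
noncomputable def ccDelEquiv (hre : (G.deleteEdges {s(u,v)}).Reachable u v) :
    (G.deleteEdges {s(u,v)}).ConnectedComponent ≃ G.ConnectedComponent where
  toFun := ConnectedComponent.lift (fun w => G.connectedComponentMk w)
    (fun a b p _ => ConnectedComponent.sound (reach_of_delete ⟨p⟩))
  invFun := ConnectedComponent.lift (fun w => (G.deleteEdges {s(u,v)}).connectedComponentMk w)
    (fun a b p _ => ConnectedComponent.sound ((reach_iff_of_not_bridge hre).mp ⟨p⟩))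
  left_inv := by
    apply ConnectedComponent.ind
    intro w; rfl
  right_inv := by
    apply ConnectedComponent.ind
    intro w; rfl

/-- components of G-e in the bridge case, vs components of G, minus the component of v -/
noncomputable def ccBridgeEquiv (huv : G.Adj u v)
    (hbr : ¬ (G.deleteEdges {s(u,v)}).Reachable u v) :
    G.ConnectedComponent ≃
      {x : (G.deleteEdges {s(u,v)}).ConnectedComponent //
        x ≠ (G.deleteEdges {s(u,v)}).connectedComponentMk v} where
  toFun := ConnectedComponent.lift (fun w =>
    if h : (G.deleteEdges {s(u,v)}).Reachable v w then
      ⟨(G.deleteEdges {s(u,v)}).connectedComponentMk u, by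
        intro hc
        exact hbr (ConnectedComponent.exact hc)⟩
    else
      ⟨(G.deleteEdges {s(u,v)}).connectedComponentMk w, by
        intro hc
        exact h (ConnectedComponent.exact hc).symm⟩)
    (by
      intro a b p _
      rcases reach_delete_cases (u := u) (v := v) p with hr | ⟨h3, h4⟩ | ⟨h3, h4⟩
      · by_cases hva : (G.deleteEdges {s(u,v)}).Reachable v a
        · simp only [dif_pos hva, dif_pos (hva.trans hr)]
        · simp only [dif_neg hva, dif_neg (fun h : (G.deleteEdges {s(u,v)}).Reachable v b => hva (h.trans hr.symm))]
          exact Subtype.ext (ConnectedComponent.sound hr)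
      · -- a reaches u, v reaches b
        have hva : ¬ (G.deleteEdges {s(u,v)}).Reachable v a :=
          fun h => hbr (h.trans h3).symm
        simp only [dif_neg hva, dif_pos h4]
        exact Subtype.ext (ConnectedComponent.sound h3)
      · have hvb : ¬ (G.deleteEdges {s(u,v)}).Reachable v b :=
          fun h => hbr (h4.trans h.symm)
        simp only [dif_pos h3.symm, dif_neg hvb]
        exact Subtype.ext (ConnectedComponent.sound h4))
  invFun x := ConnectedComponent.lift (fun w => G.connectedComponentMk w)
    (fun a b p _ => ConnectedComponent.sound (reach_of_delete ⟨p⟩)) x.1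
  left_inv := by
    apply ConnectedComponent.ind
    intro w
    by_cases h : (G.deleteEdges {s(u,v)}).Reachable v w
    · simp only [ConnectedComponent.lift_mk, dif_pos h]
      exact ConnectedComponent.sound (huv.reachable.trans (reach_of_delete h))
    · simp only [ConnectedComponent.lift_mk, dif_neg h]
  right_inv := by
    rintro ⟨x, hx⟩
    revert hx
    refine ConnectedComponent.ind (fun w => ?_) x
    intro hx
    have hvw : ¬ (G.deleteEdges {s(u,v)}).Reachable v w := by
      intro h
      exact hx (ConnectedComponent.sound h.symm)
    simp only [ConnectedComponent.lift_mk, dif_neg hvw]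

end Components

section CCContract

variable {G : SimpleGraph V} {u v : V}

lemma contract_step (huv : G.Adj u v) {a b : V} (hab : G.Adj a b) :
    (contractG G u v).Reachable (extMap (G.ne_of_adj huv) a) (extMap (G.ne_of_adj huv) b) := by
  have hne := G.ne_of_adj huv
  by_cases ha : a = v
  · subst ha
    have hbv : b ≠ a := fun h => G.loopless.irrefl a (h ▸ hab)
    by_cases hb : b = u
    · subst hb
      rw [extMap_v, extMap_ne _ hbv]
    · rw [extMap_v, extMap_ne _ hbv]
      refine Adj.reachable ?_
      rw [contractG_adj]
      exact ⟨fun h => hb (congrArg Subtype.val h).symm, Or.inr (Or.inr ⟨hab.symm, rfl⟩)⟩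
  · by_cases hb : b = v
    · subst hb
      have hav : a ≠ b := fun h => G.loopless.irrefl b (h ▸ hab)
      by_cases hau : a = u
      · subst hau
        rw [extMap_v, extMap_ne _ hav]
      · rw [extMap_v, extMap_ne _ hav]
        refine Adj.reachable ?_
        rw [contractG_adj]
        exact ⟨fun h => hau (congrArg Subtype.val h), Or.inr (Or.inl ⟨hab, rfl⟩)⟩
    · rw [extMap_ne _ ha, extMap_ne _ hb]
      refine Adj.reachable ?_
      rw [contractG_adj]
      exact ⟨fun h => (G.ne_of_adj hab) (congrArg Subtype.val h), Or.inl hab⟩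

lemma contract_reach (huv : G.Adj u v) {a b : V} (h : G.Reachable a b) :
    (contractG G u v).Reachable (extMap (G.ne_of_adj huv) a) (extMap (G.ne_of_adj huv) b) := by
  obtain ⟨w⟩ := h
  induction w with
  | nil => exact Reachable.refl _
  | @cons a c b h p ih => exact (contract_step huv h).trans ih

lemma contract_adj_reach (huv : G.Adj u v) {a b : {w : V // w ≠ v}}
    (h : (contractG G u v).Adj a b) : G.Reachable ↑a ↑b := by
  rw [contractG_adj] at h
  rcases h with ⟨hne, hadj | ⟨h1, h2⟩ | ⟨h1, h2⟩⟩
  · exact hadj.reachable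
  · rw [h2]; exact h1.reachable.trans huv.symm.reachable
  · rw [h2]; exact (h1.reachable.trans huv.symm.reachable).symm

lemma contract_reach' (huv : G.Adj u v) {a b : {w : V // w ≠ v}}
    (h : (contractG G u v).Reachable a b) : G.Reachable ↑a ↑b := by
  obtain ⟨w⟩ := h
  induction w with
  | nil => exact Reachable.refl _
  | @cons a c b h p ih => exact (contract_adj_reach huv h).trans ih

noncomputable def ccContractEquiv (huv : G.Adj u v) :
    G.ConnectedComponent ≃ (contractG G u v).ConnectedComponent where
  toFun := ConnectedComponent.lift
    (fun w => (contractG G u v).connectedComponentMk (extMap (G.ne_of_adj huv) w))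
    (fun a b p _ => ConnectedComponent.sound (contract_reach huv ⟨p⟩))
  invFun := ConnectedComponent.lift (fun w => G.connectedComponentMk ↑w)
    (fun a b p _ => ConnectedComponent.sound (contract_reach' huv ⟨p⟩))
  left_inv := by
    apply ConnectedComponent.ind
    intro w
    simp only [ConnectedComponent.lift_mk]
    by_cases hw : w = v
    · subst hw
      rw [extMap_v]
      exact ConnectedComponent.sound huv.reachable
    · rw [extMap_ne _ hw]
  right_inv := by
    apply ConnectedComponent.ind
    rintro ⟨w, hw⟩
    simp only [ConnectedComponent.lift_mk]
    rw [extMap_ne _ hw]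

end CCContract

section CardFacts

variable {G : SimpleGraph V} {u v : V}

open scoped Classical

lemma card_cc_contract (huv : G.Adj u v) :
    Nat.card (contractG G u v).ConnectedComponent = Nat.card G.ConnectedComponent :=
  (Nat.card_congr (ccContractEquiv huv)).symm

lemma card_cc_del_nonbridge (hre : (G.deleteEdges {s(u,v)}).Reachable u v) :
    Nat.card (G.deleteEdges {s(u,v)}).ConnectedComponent = Nat.card G.ConnectedComponent :=
  Nat.card_congr (ccDelEquiv hre)

lemma card_cc_del_bridge [Fintype V] (huv : G.Adj u v)
    (hbr : ¬ (G.deleteEdges {s(u,v)}).Reachable u v) :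
    Nat.card (G.deleteEdges {s(u,v)}).ConnectedComponent
      = Nat.card G.ConnectedComponent + 1 := by
  set G1 := G.deleteEdges {s(u,v)}
  have e1 : ({x : G1.ConnectedComponent // x ≠ G1.connectedComponentMk v} ⊕
      {x : G1.ConnectedComponent // ¬ x ≠ G1.connectedComponentMk v}) ≃ G1.ConnectedComponent :=
    Equiv.sumCompl _
  have e2 : {x : G1.ConnectedComponent // ¬ x ≠ G1.connectedComponentMk v} ≃ Unit :=
    { toFun := fun _ => Unit.unit
      invFun := fun _ => ⟨G1.connectedComponentMk v, fun h => h rfl⟩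
      left_inv := fun ⟨x, hx⟩ => Subtype.ext (not_ne_iff.mp hx).symm
      right_inv := fun _ => rfl }
  have h2 : Nat.card {x : G1.ConnectedComponent // ¬ x ≠ G1.connectedComponentMk v} = 1 :=
    (Nat.card_congr e2).trans Nat.card_unique
  have h1 : Nat.card G1.ConnectedComponent
      = Nat.card {x : G1.ConnectedComponent // x ≠ G1.connectedComponentMk v}
        + Nat.card {x : G1.ConnectedComponent // ¬ x ≠ G1.connectedComponentMk v} := by
    rw [← Nat.card_sum, Nat.card_congr e1]
  rw [h1, h2, Nat.card_congr (ccBridgeEquiv huv hbr)]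

lemma card_cc_le [Fintype V] : Nat.card G.ConnectedComponent ≤ Fintype.card V := by
  rw [← Nat.card_eq_fintype_card]
  exact Nat.card_le_card_of_surjective G.connectedComponentMk (fun c => Quot.exists_rep c)

lemma card_cc_lt [Fintype V] (huv : G.Adj u v) :
    Nat.card G.ConnectedComponent < Fintype.card V := by
  haveI : Fintype G.ConnectedComponent := Fintype.ofFinite _
  have h := Fintype.card_lt_of_surjective_not_injective G.connectedComponentMk
    (fun c => Quot.exists_rep c) (fun hinj =>
      G.ne_of_adj huv (hinj (ConnectedComponent.sound huv.reachable)))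
  rw [Nat.card_eq_fintype_card]
  exact h

lemma card_cc_bot : Nat.card (⊥ : SimpleGraph V).ConnectedComponent = Nat.card V :=
  Nat.card_congr (Equiv.symm (Equiv.ofBijective (⊥ : SimpleGraph V).connectedComponentMk
    ⟨fun a b h => reachable_bot.mp (ConnectedComponent.exact h), fun c => Quot.exists_rep c⟩))

lemma coloring_bot_card (κ : Type) :
    Nat.card ((⊥ : SimpleGraph V).Coloring κ) = Nat.card (V → κ) :=
  Nat.card_congr
    { toFun := fun c => (c : V → κ)
      invFun := fun f => Coloring.mk f (fun h => absurd h (by simp))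
      left_inv := fun c => rfl
      right_inv := fun f => rfl }

end CardFacts

section Main

lemma coloring_zero_empty {V : Type} (G : SimpleGraph V) (w : V) :
    Nat.card (G.Coloring (Fin 0)) = 0 :=
  @Nat.card_of_isEmpty _ ⟨fun c => (c w).elim0⟩

def ChromClaim {V : Type} [Fintype V] (G : SimpleGraph V) : Prop :=
  ∃ pz : Polynomial ℤ,
    (∀ k : ℕ, (pz.map (Int.castRingHom ℝ)).eval (k:ℝ) = Nat.card (G.Coloring (Fin k))) ∧
    ∀ x : ℝ, 0 < x → x < 1 →
      x ^ (Nat.card G.ConnectedComponent) *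
        (1-x) ^ (Fintype.card V - Nat.card G.ConnectedComponent)
      ≤ (-1:ℝ) ^ (Fintype.card V - Nat.card G.ConnectedComponent) *
          (pz.map (Int.castRingHom ℝ)).eval x

lemma chrom_main : ∀ (nv ne : ℕ) (V : Type) [Fintype V] (G : SimpleGraph V),
    Fintype.card V = nv → G.edgeSet.ncard = ne → ChromClaim G := by
  intro nv
  induction nv using Nat.strong_induction_on with
  | _ nv ihv =>
  intro ne
  induction ne using Nat.strong_induction_on with
  | _ ne ihe =>
  intro V _ G hnv hedge
  classical
  by_cases hbot : G = ⊥
  · -- base case : no edges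
    subst hbot
    refine ⟨X ^ (Fintype.card V), ?_, ?_⟩
    · intro k
      rw [Polynomial.map_pow, Polynomial.map_X, eval_pow, eval_X,
        coloring_bot_card (Fin k), Nat.card_fun]
      simp [Nat.card_eq_fintype_card]
    · intro x hx0 hx1
      have hc : Nat.card (⊥ : SimpleGraph V).ConnectedComponent = Fintype.card V := by
        rw [card_cc_bot, Nat.card_eq_fintype_card]
      rw [hc, Nat.sub_self]
      simp only [pow_zero, mul_one, one_mul, Polynomial.map_pow, Polynomial.map_X,
        eval_pow, eval_X]
      exact le_refl _
  · -- inductive step : G has an edge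
    have hEne : G.edgeSet.Nonempty := by
      rw [Set.nonempty_iff_ne_empty, ne_eq, edgeSet_eq_empty]
      exact hbot
    obtain ⟨e, he⟩ := hEne
    induction e using Sym2.ind with
    | _ u v =>
    have huv : G.Adj u v := (mem_edgeSet G).mp he
    subst hnv
    subst hedge
    set G1 := G.deleteEdges {s(u,v)} with hG1
    set G2 := contractG G u v with hG2
    -- IH for G1
    have hlt1 : G1.edgeSet.ncard < G.edgeSet.ncard := by
      rw [hG1, edgeSet_deleteEdges]
      exact Set.ncard_diff_singleton_lt_of_mem he (Set.toFinite _)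
    obtain ⟨p1, hp1c, hp1pos⟩ :=
      ihe G1.edgeSet.ncard hlt1 V G1 rfl rfl
    -- IH for G2
    have hcard2 : Fintype.card {w : V // w ≠ v} = Fintype.card V - 1 := by
      have h1 : Fintype.card {w : V // w = v} = 1 := Fintype.card_subtype_eq v
      have := Fintype.card_subtype_compl (fun w : V => w = v)
      rw [h1] at this
      convert this using 2
    have hvpos : 0 < Fintype.card V := Fintype.card_pos_iff.mpr ⟨u⟩
    obtain ⟨p2, hp2c, hp2pos⟩ :=
      ihv (Fintype.card V - 1) (by omega) G2.edgeSet.ncard {w : V // w ≠ v} G2 hcard2 rfl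
    -- counting identity
    have hcount : ∀ k : ℕ, Nat.card (G1.Coloring (Fin k))
        = Nat.card (G.Coloring (Fin k)) + Nat.card (G2.Coloring (Fin k)) := by
      intro k
      rw [Nat.card_congr (delContractEquiv huv), Nat.card_sum]
    have hpc : ∀ k : ℕ, ((p1 - p2).map (Int.castRingHom ℝ)).eval (k:ℝ)
        = Nat.card (G.Coloring (Fin k)) := by
      intro k
      have h1 := hp1c k
      have h2 := hp2c k
      have h3 := hcount k
      rw [Polynomial.map_sub, eval_sub, h1, h2, h3]
      push_cast
      ring
    refine ⟨p1 - p2, hpc, ?_⟩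
    set c := Nat.card G.ConnectedComponent with hc
    have hclt : c < Fintype.card V := card_cc_lt huv
    have hcc2 : Nat.card G2.ConnectedComponent = c := card_cc_contract huv
    obtain ⟨m, hm⟩ : ∃ m, Fintype.card V - c = m + 1 := ⟨Fintype.card V - c - 1, by omega⟩
    intro x hx0 hx1
    have h1x : (0:ℝ) < 1 - x := by linarith
    by_cases hre : G1.Reachable u v
    · -- non-bridge case
      have hcc1 : Nat.card G1.ConnectedComponent = c := card_cc_del_nonbridge hre
      have e1 := hp1pos x hx0 hx1
      have e2 := hp2pos x hx0 hx1
      rw [hcc1] at e1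
      rw [hcc2, hcard2] at e2
      have hexp2 : Fintype.card V - 1 - c = m := by omega
      rw [hexp2] at e2
      rw [hm] at e1 ⊢
      have hpow : ((-1:ℝ)) ^ (m+1) = (-1:ℝ)^m * (-1) := pow_succ _ _
      have hsplit : (-1:ℝ)^(m+1) * ((p1 - p2).map (Int.castRingHom ℝ)).eval x
          = (-1:ℝ)^(m+1) * (p1.map (Int.castRingHom ℝ)).eval x
            + (-1:ℝ)^m * (p2.map (Int.castRingHom ℝ)).eval x := by
        rw [Polynomial.map_sub, eval_sub, hpow]
        ring
      have hpos2 : (0:ℝ) < x ^ c * (1-x)^m :=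
        mul_pos (pow_pos hx0 _) (pow_pos h1x _)
      rw [hsplit]
      calc x ^ c * (1-x)^(m+1) ≤ (-1:ℝ)^(m+1) * (p1.map (Int.castRingHom ℝ)).eval x := e1
        _ ≤ (-1:ℝ)^(m+1) * (p1.map (Int.castRingHom ℝ)).eval x
            + (-1:ℝ)^m * (p2.map (Int.castRingHom ℝ)).eval x := by linarith
    · -- bridge case
      have hcc1 : Nat.card G1.ConnectedComponent = c + 1 := card_cc_del_bridge huv hre
      have hc1le : c + 1 ≤ Fintype.card V := by
        rw [← hcc1]; exact card_cc_le
      -- polynomial identity X * P = (X - 1) * P1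
      have hXid : (X * ((p1 - p2).map (Int.castRingHom ℝ)))
          = ((X - Polynomial.C 1) * (p1.map (Int.castRingHom ℝ))) := by
        apply poly_ext_nat
        intro k
        simp only [eval_mul, eval_X, eval_sub, eval_C]
        rw [hpc k, hp1c k]
        rcases Nat.eq_zero_or_pos k with hk | hk
        · subst hk
          rw [coloring_zero_empty G1 u]
          simp
        · have hb := bridge_card_eq huv hre k hk
          have hbr' := congrArg (fun n : ℕ => (n : ℝ)) hb
          simp only [Nat.cast_mul, Nat.cast_sub hk, Nat.cast_one] at hbr'
          linarith [hbr']
      have e1 := hp1pos x hx0 hx1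
      rw [hcc1] at e1
      have hexp1 : Fintype.card V - (c+1) = m := by omega
      rw [hexp1] at e1
      rw [hm]
      have hXx := congrArg (fun q => q.eval x) hXid
      simp only [eval_mul, eval_X, eval_sub, eval_C] at hXx
      -- hXx : x * eval (P (p1-p2)) = (x - 1) * eval (P p1)
      have key : ((-1:ℝ)^(m+1) * ((p1 - p2).map (Int.castRingHom ℝ)).eval x) * x
          = (1 - x) * ((-1:ℝ)^m * (p1.map (Int.castRingHom ℝ)).eval x) := by
        have hpow : ((-1:ℝ)) ^ (m+1) = (-1:ℝ)^m * (-1) := pow_succ _ _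
        rw [hpow]
        have hXx' : x * (((p1 - p2).map (Int.castRingHom ℝ)).eval x)
            = (x - 1) * ((p1.map (Int.castRingHom ℝ)).eval x) := hXx
        linear_combination (-1:ℝ) * (-1:ℝ)^m * hXx'
      have hrhs : (1 - x) * (x ^ (c+1) * (1-x)^m)
          ≤ (1 - x) * ((-1:ℝ)^m * (p1.map (Int.castRingHom ℝ)).eval x) :=
        mul_le_mul_of_nonneg_left e1 (le_of_lt h1x)
      have : (x ^ c * (1-x)^(m+1)) * x
          ≤ ((-1:ℝ)^(m+1) * ((p1 - p2).map (Int.castRingHom ℝ)).eval x) * x := by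
        rw [key]
        calc (x ^ c * (1-x)^(m+1)) * x = (1-x) * (x^(c+1) * (1-x)^m) := by ring
          _ ≤ _ := hrhs
      exact le_of_mul_le_mul_right this hx0

end Main

/-- `x` is a chromatic root if it is a root of the chromatic polynomial of some
finite graph, where the chromatic polynomial is characterised by counting proper
colorings at every natural number. -/
def IsChromaticRoot (x : ℝ) : Prop :=
  ∃ (V : Type) (_ : Fintype V) (G : SimpleGraph V) (p : Polynomial ℝ),
    (∀ k : ℕ, p.eval (k : ℝ) = Nat.card (G.Coloring (Fin k))) ∧ p.eval x = 0

theorem goldenRatio_sq_not_chromaticRoot : ¬ IsChromaticRoot (phi ^ 2) := by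
  rintro ⟨V, hV, G, p, hcount, hroot⟩
  haveI := hV
  classical
  obtain ⟨pz, hc, hpos⟩ := chrom_main (Fintype.card V) G.edgeSet.ncard V G rfl rfl
  have hpq : p = pz.map (Int.castRingHom ℝ) :=
    poly_ext_nat (fun k => by rw [hcount k, hc k])
  have h1 : Polynomial.eval₂ (Int.castRingHom ℝ) ((3 + Real.sqrt 5)/2) pz = 0 := by
    rw [← Polynomial.eval_map, ← phi_sq, ← hpq]
    exact hroot
  have h2 := conj_root pz h1
  have hs3 : Real.sqrt 5 < 3 := by nlinarith [sqrt5_sq, Real.sqrt_nonneg 5]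
  have hs1 : 1 < Real.sqrt 5 := by nlinarith [sqrt5_sq, Real.sqrt_nonneg 5]
  set y : ℝ := (3 - Real.sqrt 5)/2 with hy
  have hy0 : 0 < y := by rw [hy]; linarith
  have hy1 : y < 1 := by rw [hy]; linarith
  have hpy : (pz.map (Int.castRingHom ℝ)).eval y = 0 := by
    rw [Polynomial.eval_map]; exact h2
  have hP := hpos y hy0 hy1
  rw [hpy, mul_zero] at hP
  have hlt : 0 < y ^ (Nat.card G.ConnectedComponent)
      * (1-y) ^ (Fintype.card V - Nat.card G.ConnectedComponent) :=
    mul_pos (pow_pos hy0 _) (pow_pos (by linarith) _)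
  linarith
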